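/- For a simple connected graph G on n ≥ 3 vertices with normalized Laplacian eigenvalues λ_1 ≥ ... ≥ λ_{n-1} > λ_n = 0, and any θ with λ_1 ≥ θ and n/(n-1) ≤ θ: if 0 < α < 1 then ∑_{i=1}^{n-1} λ_i^α ≤ θ^α + (n-θ)^α/(n-2)^{α-1}. -/

import Mathlib

open Matrix Finset

/-- The normalized Laplacian `D^{-1/2} (D - A) D^{-1/2}` of a simple graph. -/
noncomputable def normLap {n : ℕ} (G : SimpleGraph (Fin n)) [DecidableRel G.Adj] :
    Matrix (Fin n) (Fin n) ℝ :=
  let Dinvhalf : Matrix (Fin n) (Fin n) ℝ :=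
    Matrix.diagonal fun i => (Real.sqrt (G.degree i))⁻¹
  Dinvhalf * (Matrix.diagonal (fun i => (G.degree i : ℝ)) - G.adjMatrix ℝ) * Dinvhalf

/-- Tangent line inequality for concave power functions. -/
lemma rpow_tangent {a b α : ℝ} (ha : 0 < a) (hb : 0 ≤ b) (hα1 : 0 ≤ α) (hα2 : α ≤ 1) :
    b ^ α ≤ a ^ α + α * a ^ (α - 1) * (b - a) := by
  have hs : -1 ≤ (b - a) / a := by
    rw [le_div_iff₀ ha]; linarith
  have h := rpow_one_add_le_one_add_mul_self hs hα1 hα2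
  have h1 : (1 : ℝ) + (b - a) / a = b / a := by field_simp; ring
  rw [h1] at h
  rw [Real.div_rpow hb ha.le] at h
  have ha' : (0 : ℝ) < a ^ α := Real.rpow_pos_of_pos ha α
  rw [div_le_iff₀ ha'] at h
  have key : a ^ (α - 1) = a ^ α / a := by
    rw [Real.rpow_sub ha, Real.rpow_one]
  calc b ^ α ≤ (1 + α * ((b - a) / a)) * a ^ α := h
    _ = a ^ α + α * (a ^ α / a) * (b - a) := by field_simp
    _ = a ^ α + α * a ^ (α - 1) * (b - a) := by rw [key]

/-- Trace of a Hermitian real matrix equals the sum of its eigenvalues. -/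
lemma trace_eq_sum_eigenvalues {m : ℕ} {A : Matrix (Fin m) (Fin m) ℝ}
    (hA : A.IsHermitian) : A.trace = ∑ i, hA.eigenvalues i := by
  rw [hA.trace_eq_sum_eigenvalues]
  rfl

theorem sAlpha_upper_bound {n : ℕ} (hn : 3 ≤ n) (G : SimpleGraph (Fin n)) [DecidableRel G.Adj]
    (hG : G.Connected) (hH : (normLap G).IsHermitian)
    (lam : Fin n → ℝ) (hanti : Antitone lam)
    (hperm : ∃ σ : Equiv.Perm (Fin n), lam = hH.eigenvalues ∘ σ)
    (hlast : lam ⟨n - 1, by omega⟩ = 0) (hpos : lam ⟨n - 2, by omega⟩ > 0)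
    (θ α : ℝ) (hθ1 : lam ⟨0, by omega⟩ ≥ θ) (hθ2 : (n : ℝ) / ((n : ℝ) - 1) ≤ θ)
    (hα1 : 0 < α) (hα2 : α < 1) :
    (∑ i ∈ Finset.univ.filter (fun i : Fin n => (i : ℕ) < n - 1), lam i ^ α) ≤
      θ ^ α + ((n : ℝ) - θ) ^ α / ((n : ℝ) - 2) ^ (α - 1) := by
  have hn3 : (3 : ℝ) ≤ (n : ℝ) := by exact_mod_cast hn
  -- all degrees are positive
  have hdeg : ∀ v : Fin n, 0 < G.degree v := by
    intro v
    rw [G.degree_pos_iff_exists_adj]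
    have : Nontrivial (Fin n) := Fin.nontrivial_iff_two_le.mpr (by omega)
    obtain ⟨w, hw⟩ := exists_ne v
    obtain ⟨p⟩ := hG.preconnected v w
    have hnil : ¬ p.Nil := SimpleGraph.Walk.not_nil_of_ne hw.symm
    exact ⟨p.getVert 1, p.adj_snd hnil⟩
  -- trace of normLap is n
  have htr : (normLap G).trace = n := by
    unfold normLap
    simp only [Matrix.trace, Matrix.diag_apply, Matrix.mul_diagonal, Matrix.diagonal_mul,
      Matrix.sub_apply, Matrix.diagonal_apply_eq, SimpleGraph.adjMatrix_apply]
    have : ∀ v : Fin n,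
        (Real.sqrt (G.degree v))⁻¹ * (((G.degree v : ℝ)) - if G.Adj v v then 1 else 0) *
          (Real.sqrt (G.degree v))⁻¹ = 1 := by
      intro v
      have h0 : (0 : ℝ) < (G.degree v : ℝ) := by exact_mod_cast hdeg v
      rw [if_neg (G.irrefl), sub_zero]
      have hsq : Real.sqrt (G.degree v) * Real.sqrt (G.degree v) = (G.degree v : ℝ) :=
        Real.mul_self_sqrt h0.le
      have hsqpos : 0 < Real.sqrt (G.degree v) := Real.sqrt_pos.mpr h0
      rw [← hsq]
      field_simp
      rw [Real.sqrt_sq hsqpos.le]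
    rw [Finset.sum_congr rfl (fun v _ => this v)]
    simp
  -- total sum of lam is n
  have hsum_all : ∑ i, lam i = n := by
    obtain ⟨σ, hσ⟩ := hperm
    rw [hσ]
    rw [show (hH.eigenvalues ∘ σ) = fun i => hH.eigenvalues (σ i) from rfl]
    rw [Equiv.sum_comp σ hH.eigenvalues, ← trace_eq_sum_eigenvalues hH, htr]
  clear hperm htr hdeg hG
  set S : Finset (Fin n) := Finset.univ.filter (fun i : Fin n => (i : ℕ) < n - 1) with hS
  have hcompl : Sᶜ = {(⟨n - 1, by omega⟩ : Fin n)} := by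
    ext i
    simp only [Finset.mem_compl, hS, Finset.mem_filter, Finset.mem_univ, true_and,
      Finset.mem_singleton, not_lt, Fin.ext_iff, Fin.val_mk]
    omega
  have hsum_S : ∑ i ∈ S, lam i = n := by
    have := Finset.sum_add_sum_compl S lam
    rw [hcompl, Finset.sum_singleton, hlast, add_zero] at this
    rw [this, hsum_all]
  have hcardS : S.card = n - 1 := by
    have h1 : Sᶜ.card = 1 := by rw [hcompl]; simp
    have h2 : Sᶜ.card = Fintype.card (Fin n) - S.card := Finset.card_compl S
    have h3 : S.card ≤ Fintype.card (Fin n) := Finset.card_le_univ S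
    simp only [Fintype.card_fin] at h2 h3
    omega
  -- membership facts
  have hmem0 : (⟨0, by omega⟩ : Fin n) ∈ S := by
    simp only [hS, Finset.mem_filter, Finset.mem_univ, true_and]; omega
  have hmem2 : (⟨n - 2, by omega⟩ : Fin n) ∈ S := by
    simp only [hS, Finset.mem_filter, Finset.mem_univ, true_and]; omega
  -- positivity on S
  have hposS : ∀ i ∈ S, 0 < lam i := by
    intro i hi
    simp only [hS, Finset.mem_filter, Finset.mem_univ, true_and] at hi
    have hle : i ≤ (⟨n - 2, by omega⟩ : Fin n) := by
      simp only [Fin.le_def, Fin.val_mk]; omega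
    exact lt_of_lt_of_le hpos (hanti hle)
  set S' : Finset (Fin n) := S.erase ⟨0, by omega⟩ with hS'
  set x : ℝ := lam ⟨0, by omega⟩ with hx
  set s : ℝ := ∑ i ∈ S', lam i with hs
  have hsplit : x + s = n := by
    rw [hx, hs, hS', Finset.add_sum_erase S lam hmem0, hsum_S]
  have hcardS' : S'.card = n - 2 := by
    rw [hS', Finset.card_erase_of_mem hmem0, hcardS]
    omega
  have hmem2' : (⟨n - 2, by omega⟩ : Fin n) ∈ S' := by
    rw [hS', Finset.mem_erase]
    refine ⟨?_, hmem2⟩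
    simp only [ne_eq, Fin.ext_iff, Fin.val_mk]
    omega
  have hspos : 0 < s := by
    rw [hs]
    apply Finset.sum_pos
    · intro i hi
      exact hposS i (Finset.mem_of_mem_erase hi)
    · exact ⟨_, hmem2'⟩
  have hxpos : 0 < x := hposS _ hmem0
  have hα1' : (0 : ℝ) ≤ α := hα1.le
  have hα2' : α ≤ 1 := hα2.le
  -- n - 2 > 0
  have hn2 : (0 : ℝ) < (n : ℝ) - 2 := by linarith
  -- θ bounds
  have hθpos : 0 < θ :=
    lt_of_lt_of_le (div_pos (by linarith) (by linarith)) hθ2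
  have hxn : x < n := by linarith
  have hθn : θ < n := lt_of_le_of_lt hθ1 hxn
  have hnθ : 0 < (n : ℝ) - θ := by linarith
  have hnx : 0 < (n : ℝ) - x := by linarith
  -- Step 1: sum over S' bounded by (n-2)^(1-α) * s^α  (tangent at mean m = s/(n-2))
  set m : ℝ := s / ((n : ℝ) - 2) with hm
  have hmpos : 0 < m := div_pos hspos hn2
  have hstep1 : ∑ i ∈ S', lam i ^ α ≤ ((n : ℝ) - 2) ^ (1 - α) * s ^ α := by
    have hbound : ∀ i ∈ S', lam i ^ α ≤ m ^ α + α * m ^ (α - 1) * (lam i - m) := by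
      intro i hi
      exact rpow_tangent hmpos (hposS i (Finset.mem_of_mem_erase hi)).le hα1' hα2'
    calc ∑ i ∈ S', lam i ^ α
        ≤ ∑ i ∈ S', (m ^ α + α * m ^ (α - 1) * (lam i - m)) :=
          Finset.sum_le_sum hbound
      _ = S'.card * m ^ α + α * m ^ (α - 1) * (s - S'.card * m) := by
          rw [Finset.sum_add_distrib, ← Finset.mul_sum, Finset.sum_const, nsmul_eq_mul]
          rw [Finset.sum_sub_distrib, Finset.sum_const, nsmul_eq_mul, ← hs]
      _ = ((n : ℝ) - 2) * m ^ α := by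
          have hc : (S'.card : ℝ) = (n : ℝ) - 2 := by
            rw [hcardS', Nat.cast_sub (by omega : 2 ≤ n)]
            norm_num
          rw [hc]
          have : s - ((n : ℝ) - 2) * m = 0 := by
            rw [hm]; field_simp; ring
          rw [this, mul_zero, add_zero]
      _ = ((n : ℝ) - 2) ^ (1 - α) * s ^ α := by
          rw [hm, Real.div_rpow hspos.le hn2.le]
          rw [Real.rpow_sub hn2, Real.rpow_one]
          field_simp
  -- Step 2: monotonicity: x^α + (n-2)^(1-α)(n-x)^α ≤ θ^α + (n-2)^(1-α)(n-θ)^α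
  have hstep2 : x ^ α + ((n : ℝ) - 2) ^ (1 - α) * ((n : ℝ) - x) ^ α ≤
      θ ^ α + ((n : ℝ) - 2) ^ (1 - α) * ((n : ℝ) - θ) ^ α := by
    have h1 : x ^ α ≤ θ ^ α + α * θ ^ (α - 1) * (x - θ) :=
      rpow_tangent hθpos hxpos.le hα1' hα2'
    have h2 : ((n : ℝ) - x) ^ α ≤ ((n : ℝ) - θ) ^ α + α * ((n : ℝ) - θ) ^ (α - 1) * (θ - x) := by
      have := rpow_tangent hnθ hnx.le hα1' hα2'
      convert this using 2
      ring
    have hkey : θ ^ (α - 1) ≤ ((n : ℝ) - 2) ^ (1 - α) * ((n : ℝ) - θ) ^ (α - 1) := by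
      have hquot : ((n : ℝ) - θ) / ((n : ℝ) - 2) ≤ θ := by
        rw [div_le_iff₀ hn2]
        -- n - θ ≤ θ (n-2)  ⟺  n ≤ θ(n-1)  ⟸  θ ≥ n/(n-1)
        have : (n : ℝ) / ((n : ℝ) - 1) ≤ θ := hθ2
        have hn1 : (0 : ℝ) < (n : ℝ) - 1 := by linarith
        rw [div_le_iff₀ hn1] at this
        nlinarith
      have hqpos : 0 < ((n : ℝ) - θ) / ((n : ℝ) - 2) := div_pos hnθ hn2
      have := Real.rpow_le_rpow_of_nonpos hqpos hquot (by linarith : α - 1 ≤ 0)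
      calc θ ^ (α - 1) ≤ (((n : ℝ) - θ) / ((n : ℝ) - 2)) ^ (α - 1) := this
        _ = ((n : ℝ) - θ) ^ (α - 1) / ((n : ℝ) - 2) ^ (α - 1) :=
            Real.div_rpow hnθ.le hn2.le _
        _ = ((n : ℝ) - 2) ^ (1 - α) * ((n : ℝ) - θ) ^ (α - 1) := by
            rw [show (1 : ℝ) - α = -(α - 1) by ring, Real.rpow_neg hn2.le]
            field_simp
      -- done
    have hfac : 0 ≤ x - θ := by linarith
    have hnn : (0:ℝ) < ((n : ℝ) - 2) ^ (1 - α) := Real.rpow_pos_of_pos hn2 _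
    have e1 := mul_le_mul_of_nonneg_left h2 hnn.le
    have e2 := mul_le_mul_of_nonneg_left hkey (mul_nonneg hα1' hfac)
    nlinarith [e1, e2, h1]
  -- put pieces together
  have hfinal : x ^ α + ∑ i ∈ S', lam i ^ α = ∑ i ∈ S, lam i ^ α :=
    Finset.add_sum_erase S (fun i => lam i ^ α) hmem0
  rw [← hfinal]
  have hnxs : (n : ℝ) - x = s := by rw [← hsplit]; ring
  have hrhs : ((n : ℝ) - θ) ^ α / ((n : ℝ) - 2) ^ (α - 1) =
      ((n : ℝ) - 2) ^ (1 - α) * ((n : ℝ) - θ) ^ α := by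
    rw [show (1 : ℝ) - α = -(α - 1) by ring, Real.rpow_neg hn2.le]
    field_simp
  rw [hrhs]
  calc x ^ α + ∑ i ∈ S', lam i ^ α
      ≤ x ^ α + ((n : ℝ) - 2) ^ (1 - α) * s ^ α := add_le_add_right hstep1 _
    _ = x ^ α + ((n : ℝ) - 2) ^ (1 - α) * ((n : ℝ) - x) ^ α := by rw [hnxs]
    _ ≤ θ ^ α + ((n : ℝ) - 2) ^ (1 - α) * ((n : ℝ) - θ) ^ α := hstep2
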